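/- Let (F_n) be a sequence of row-stochastic matrices (F_n of size |V_{n+1}| × |V_n|) and let m_n = min over all entries of F_n. If Σ_n m_n = ∞ and the sizes |V_n| are uniformly bounded below by 1 and above by K, then for any two sequences of probability vectors (p^(n)), (q^(n)) satisfying F_n^T p^(n+1) = p^(n) and F_n^T q^(n+1) = q^(n) for all n, one has p^(n) = q^(n) for all n. -/

import Mathlib

open Finset Real Filter

/-- If `(F n)` is a sequence of row-stochastic matrices whose minimal entries `m n`
satisfy `∑ m n = ∞`, and the level sizes are uniformly bounded (`1 ≤ |V n| ≤ K`), then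
any two sequences of probability vectors `(p n)`, `(q n)` with `F_n^T p^{(n+1)} = p^{(n)}`
and `F_n^T q^{(n+1)} = q^{(n)}` coincide. -/
theorem stmt9 (K : ℕ) (V : ℕ → Type*) [∀ n, Fintype (V n)] [∀ n, Nonempty (V n)]
    (hK : ∀ n, Fintype.card (V n) ≤ K)
    (F : ∀ n, V (n + 1) → V n → ℝ)
    (hFnn : ∀ n v w, 0 ≤ F n v w) (hFrow : ∀ n v, ∑ w, F n v w = 1)
    (m : ℕ → ℝ) (hm : ∀ n, IsLeast {x : ℝ | ∃ v w, F n v w = x} (m n))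
    (hdiv : ¬ Summable m)
    (p q : ∀ n, V n → ℝ)
    (hp : ∀ n, (∀ v, 0 ≤ p n v) ∧ ∑ v, p n v = 1)
    (hq : ∀ n, (∀ v, 0 ≤ q n v) ∧ ∑ v, q n v = 1)
    (hpF : ∀ n (w : V n), ∑ v, F n v w * p (n + 1) v = p n w)
    (hqF : ∀ n (w : V n), ∑ v, F n v w * q (n + 1) v = q n w) :
    ∀ n, p n = q n := by
  have hm0 : ∀ n, 0 ≤ m n := by
    intro n
    obtain ⟨v, w, hvw⟩ := (hm n).1
    exact hvw ▸ hFnn n v w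
  have hmle : ∀ n v w, m n ≤ F n v w := by
    intro n v w
    exact (hm n).2 ⟨v, w, rfl⟩
  have hm1 : ∀ n, m n ≤ 1 := by
    intro n
    obtain ⟨v⟩ := ‹∀ n, Nonempty (V n)› (n + 1)
    obtain ⟨w⟩ := ‹∀ n, Nonempty (V n)› n
    calc m n ≤ F n v w := hmle n v w
      _ ≤ ∑ w', F n v w' := Finset.single_le_sum (fun w' _ => hFnn n v w') (mem_univ w)
      _ = 1 := hFrow n v
  set d : ℕ → ℝ := fun n => ∑ w, |p n w - q n w| with hd
  have hd0 : ∀ n, 0 ≤ d n := fun n => Finset.sum_nonneg fun w _ => abs_nonneg _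
  have hd2 : ∀ n, d n ≤ 2 := by
    intro n
    calc d n ≤ ∑ w, (p n w + q n w) := by
          apply Finset.sum_le_sum
          intro w _
          have h1 := (hp n).1 w
          have h2 := (hq n).1 w
          rw [abs_le]
          constructor <;> linarith
      _ = 2 := by rw [Finset.sum_add_distrib, (hp n).2, (hq n).2]; norm_num
  have hstep : ∀ n, d n ≤ (1 - m n) * d (n + 1) := by
    intro n
    have hsum0 : ∑ v, (p (n + 1) v - q (n + 1) v) = 0 := by
      rw [Finset.sum_sub_distrib, (hp (n + 1)).2, (hq (n + 1)).2]; ring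
    have key : ∀ w, |p n w - q n w| ≤
        ∑ v, (F n v w - m n) * |p (n + 1) v - q (n + 1) v| := by
      intro w
      have h1 : p n w - q n w
          = ∑ v, (F n v w - m n) * (p (n + 1) v - q (n + 1) v) := by
        have : ∑ v, (F n v w - m n) * (p (n + 1) v - q (n + 1) v)
            = ∑ v, (F n v w * p (n + 1) v - F n v w * q (n + 1) v)
              - m n * ∑ v, (p (n + 1) v - q (n + 1) v) := by
          rw [Finset.mul_sum, ← Finset.sum_sub_distrib]
          congr 1; ext v; ring
        rw [this, hsum0, Finset.sum_sub_distrib, hpF n w, hqF n w]; ring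
      calc |p n w - q n w|
          = |∑ v, (F n v w - m n) * (p (n + 1) v - q (n + 1) v)| := by rw [h1]
        _ ≤ ∑ v, |(F n v w - m n) * (p (n + 1) v - q (n + 1) v)| :=
            Finset.abs_sum_le_sum_abs _ _
        _ = ∑ v, (F n v w - m n) * |p (n + 1) v - q (n + 1) v| := by
            congr 1; ext v
            rw [abs_mul, abs_of_nonneg (sub_nonneg.2 (hmle n v w))]
    have hcard : (1 : ℝ) ≤ (Fintype.card (V n) : ℝ) := by
      exact_mod_cast Fintype.card_pos
    calc d n ≤ ∑ w, ∑ v, (F n v w - m n) * |p (n + 1) v - q (n + 1) v| :=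
          Finset.sum_le_sum fun w _ => key w
      _ = ∑ v, (∑ w, (F n v w - m n)) * |p (n + 1) v - q (n + 1) v| := by
          rw [Finset.sum_comm]
          congr 1; ext v; rw [Finset.sum_mul]
      _ = ∑ v, (1 - (Fintype.card (V n) : ℝ) * m n) * |p (n + 1) v - q (n + 1) v| := by
          congr 1; ext v
          rw [Finset.sum_sub_distrib, hFrow, Finset.sum_const, card_univ, nsmul_eq_mul]
      _ ≤ ∑ v, (1 - m n) * |p (n + 1) v - q (n + 1) v| := by
          apply Finset.sum_le_sum
          intro v _
          apply mul_le_mul_of_nonneg_right _ (abs_nonneg _)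
          have : m n ≤ (Fintype.card (V n) : ℝ) * m n := le_mul_of_one_le_left (hm0 n) hcard
          linarith
      _ = (1 - m n) * d (n + 1) := by rw [← Finset.mul_sum]
  have hprod_nonneg : ∀ (s : Finset ℕ), 0 ≤ ∏ i ∈ s, (1 - m i) := by
    intro s
    exact Finset.prod_nonneg fun i _ => by have := hm1 i; linarith
  have hiter : ∀ N k, d N ≤ (∏ i ∈ Finset.Ico N (N + k), (1 - m i)) * d (N + k) := by
    intro N k
    induction k with
    | zero => simp
    | succ k ih =>
      calc d N ≤ (∏ i ∈ Finset.Ico N (N + k), (1 - m i)) * d (N + k) := ih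
        _ ≤ (∏ i ∈ Finset.Ico N (N + k), (1 - m i)) * ((1 - m (N + k)) * d (N + k + 1)) :=
            mul_le_mul_of_nonneg_left (hstep (N + k)) (hprod_nonneg _)
        _ = (∏ i ∈ Finset.Ico N (N + (k + 1)), (1 - m i)) * d (N + (k + 1)) := by
            rw [show N + (k + 1) = (N + k) + 1 from rfl,
              Finset.prod_Ico_succ_top (Nat.le_add_right _ _)]
            ring
  have hbound : ∀ N k, d N ≤ 2 * Real.exp (-(∑ i ∈ Finset.Ico N (N + k), m i)) := by
    intro N k
    have h1 : d N ≤ (∏ i ∈ Finset.Ico N (N + k), (1 - m i)) * 2 :=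
      (hiter N k).trans (mul_le_mul_of_nonneg_left (hd2 _) (hprod_nonneg _))
    have h2 : ∏ i ∈ Finset.Ico N (N + k), (1 - m i)
        ≤ ∏ i ∈ Finset.Ico N (N + k), Real.exp (-(m i)) := by
      apply Finset.prod_le_prod (fun i _ => by have := hm1 i; linarith)
      intro i _
      have := Real.add_one_le_exp (-(m i))
      linarith
    rw [← Real.exp_sum] at h2
    have h3 : (∑ i ∈ Finset.Ico N (N + k), -m i) = -(∑ i ∈ Finset.Ico N (N + k), m i) :=
      Finset.sum_neg_distrib _
    rw [h3] at h2
    calc d N ≤ (∏ i ∈ Finset.Ico N (N + k), (1 - m i)) * 2 := h1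
      _ ≤ Real.exp (-(∑ i ∈ Finset.Ico N (N + k), m i)) * 2 :=
          mul_le_mul_of_nonneg_right h2 (by norm_num)
      _ = 2 * Real.exp (-(∑ i ∈ Finset.Ico N (N + k), m i)) := by ring
  have hdzero : ∀ N, d N = 0 := by
    intro N
    have htend : Tendsto (fun k => ∑ i ∈ Finset.range k, m i) atTop atTop :=
      (not_summable_iff_tendsto_nat_atTop_of_nonneg hm0).1 hdiv
    have h1 : Tendsto (fun k => ∑ i ∈ Finset.Ico N (N + k), m i) atTop atTop := by
      have heq : ∀ k, ∑ i ∈ Finset.Ico N (N + k), m i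
          = (∑ i ∈ Finset.range (k + N), m i) - ∑ i ∈ Finset.range N, m i := by
        intro k
        have h : N + k = k + N := Nat.add_comm N k
        rw [h, Finset.sum_Ico_eq_sub _ (Nat.le_add_left N k)]
      simp_rw [heq, sub_eq_add_neg]
      apply tendsto_atTop_add_const_right
      exact htend.comp (tendsto_add_atTop_nat N)
    have h2 : Tendsto (fun k => (2 : ℝ) * Real.exp (-(∑ i ∈ Finset.Ico N (N + k), m i)))
        atTop (nhds 0) := by
      have h3 : Tendsto (fun k => Real.exp (-(∑ i ∈ Finset.Ico N (N + k), m i)))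
          atTop (nhds 0) :=
        Real.tendsto_exp_atBot.comp (tendsto_neg_atBot_iff.2 h1)
      have h4 := h3.const_mul (2 : ℝ)
      rw [mul_zero] at h4
      exact h4
    have hle : d N ≤ 0 := ge_of_tendsto' h2 (hbound N)
    linarith [hd0 N]
  intro n
  funext w
  have hz : |p n w - q n w| = 0 := by
    have := (Finset.sum_eq_zero_iff_of_nonneg (fun w _ => abs_nonneg (p n w - q n w))).1
      (hdzero n) w (mem_univ w)
    exact this
  have := abs_eq_zero.1 hz
  linarith
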